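/- For n ≥ 0 and 0 ≤ r ≤ n: ∑_{k=1}^{n} (-1)^{k-1} [n choose k]_q · q^{k(k+1)/2 - rk} / (1 - q^k) = r + ∑_{k=1}^{n} q^k / (1 - q^k), as rational functions in q. -/

import Mathlib

/-- The q-Pochhammer symbol `(a;q)_n = ∏_{j=0}^{n-1} (1 - a q^j)`. -/
noncomputable def qPoch (a q : ℂ) (n : ℕ) : ℂ := ∏ j ∈ Finset.range n, (1 - a * q ^ j)

/-- The Gaussian binomial coefficient `[n choose k]_q`. -/
noncomputable def qBinom (q : ℂ) (n k : ℕ) : ℂ :=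
  qPoch q q n / (qPoch q q k * qPoch q q (n - k))



section basics
variable {q : ℂ} (hq : q ≠ 0) (hq1 : ∀ j, 1 ≤ j → q ^ j ≠ 1)

lemma qPoch_zero (a : ℂ) : qPoch a q 0 = 1 := by simp [qPoch]

lemma qPoch_succ (a : ℂ) (n : ℕ) : qPoch a q (n+1) = qPoch a q n * (1 - a * q ^ n) := by
  simp [qPoch, Finset.prod_range_succ]

include hq1 in
lemma qPoch_ne (n : ℕ) : qPoch q q n ≠ 0 := by
  simp only [qPoch]
  refine Finset.prod_ne_zero_iff.2 fun j _ => ?_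
  have : q * q ^ j = q ^ (j+1) := by ring
  rw [this]
  intro h
  exact hq1 (j+1) (by omega) (by linear_combination -h)

include hq1 in
lemma qBinom_zero (n : ℕ) : qBinom q n 0 = 1 := by
  simp [qBinom, qPoch_zero, div_self (qPoch_ne hq1 n)]

include hq1 in
lemma qBinom_self (n : ℕ) : qBinom q n n = 1 := by
  simp [qBinom, qPoch_zero, div_self (qPoch_ne hq1 n)]

end basics

section pascal
variable {q : ℂ} (hq : q ≠ 0) (hq1 : ∀ j, 1 ≤ j → q ^ j ≠ 1)

lemma qPoch_q_succ (n : ℕ) : qPoch q q (n+1) = qPoch q q n * (1 - q ^ (n+1)) := by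
  rw [qPoch_succ, pow_succ']

include hq1 in
lemma one_sub_q_ne {j : ℕ} (hj : 1 ≤ j) : (1 : ℂ) - q ^ j ≠ 0 := by
  intro h
  exact hq1 j hj (by linear_combination -h)

include hq1 in
lemma pascal {n k : ℕ} (hk1 : 1 ≤ k) (hk2 : k ≤ n) :
    qBinom q (n+1) k = qBinom q n k + q ^ (n+1-k) * qBinom q n (k-1) := by
  obtain ⟨m, rfl⟩ : ∃ m, k = m + 1 := ⟨k - 1, by omega⟩
  obtain ⟨t, rfl⟩ : ∃ t, n = m + 1 + t := ⟨n - (m+1), by omega⟩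
  have e1 : m + 1 + t + 1 - (m + 1) = t + 1 := by omega
  have e2 : m + 1 + t - (m + 1) = t := by omega
  have e3 : m + 1 + t - m = t + 1 := by omega
  simp only [qBinom, e1, e2, e3, Nat.add_sub_cancel]
  rw [show m + 1 + t + 1 = (m + t + 1) + 1 by omega, show m + 1 + t = (m + t) + 1 by omega,
    qPoch_q_succ (m + t + 1), qPoch_q_succ (m + t), qPoch_q_succ m, qPoch_q_succ t,
    show m + t + 1 + 1 = (m + 1) + (t + 1) by omega, pow_add]
  have hm := qPoch_ne hq1 m
  have ht := qPoch_ne hq1 t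
  have hmt := qPoch_ne hq1 (m + t)
  have h1 := one_sub_q_ne hq1 (j := m + 1) (by omega)
  have h2 := one_sub_q_ne hq1 (j := t + 1) (by omega)
  field_simp
  ring
end pascal

noncomputable def vhC (q : ℂ) (n k : ℕ) : ℂ :=
  if k ≤ n then (-1)^k * qBinom q n k * q^(k*(k-1)/2) else 0

section qbt
variable {q : ℂ} (hq : q ≠ 0) (hq1 : ∀ j, 1 ≤ j → q ^ j ≠ 1)

lemma tri (k : ℕ) : (k+1)*((k+1)-1)/2 = k*(k-1)/2 + k := by
  rcases k with _ | m
  · rfl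
  · have h : (m+1+1)*(m+1) = (m+1)*m + 2*(m+1) := by ring
    simp only [Nat.add_sub_cancel] at *
    omega

include hq1 in
lemma pascal' (n k : ℕ) : vhC q (n+1) (k+1) = vhC q n (k+1) - q^n * vhC q n k := by
  rcases le_or_gt (k+1) n with h | h
  · simp only [vhC, if_pos (by omega : k+1 ≤ n+1), if_pos h, if_pos (by omega : k ≤ n)]
    rw [pascal hq1 (by omega) h]
    rw [show n + 1 - (k+1) = n - k by omega, show k + 1 - 1 = k from rfl,
      show (k+1)*k/2 = (k+1)*((k+1)-1)/2 from rfl, tri, pow_add]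
    have hp : (q:ℂ)^n = q^(n-k) * q^k := by rw [← pow_add]; congr 1; omega
    rw [hp]
    ring
  rcases le_or_gt (k+1) (n+1) with h2 | h2
  · have hk : n = k := by omega
    subst hk
    simp only [vhC]
    rw [if_pos (le_refl (n+1)), if_neg (by omega : ¬ n+1 ≤ n), if_pos (le_refl n)]
    rw [qBinom_self hq1, qBinom_self hq1, tri, pow_add]
    ring
  · simp only [vhC, if_neg (by omega : ¬ k+1 ≤ n+1), if_neg (by omega : ¬ k+1 ≤ n),
      if_neg (by omega : ¬ k ≤ n)]
    ring

include hq1 in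
lemma vhC_zero (n : ℕ) : vhC q n 0 = 1 := by
  simp [vhC, qBinom_zero hq1]

lemma vhC_top (n : ℕ) : vhC q n (n+1) = 0 := by
  simp [vhC]

include hq1 in
lemma qbt (n : ℕ) (x : ℂ) :
    ∑ k ∈ Finset.range (n+1), vhC q n k * x ^ k = qPoch x q n := by
  induction n generalizing x with
  | zero => simp [vhC_zero hq1, qPoch_zero]
  | succ n ih =>
    rw [Finset.sum_range_succ']
    have h0 : vhC q (n+1) 0 * x ^ 0 = 1 := by simp [vhC_zero hq1]
    rw [h0]
    have hc : ∀ k ∈ Finset.range (n+1), vhC q (n+1) (k+1) * x^(k+1)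
        = vhC q n (k+1) * x^(k+1) - (q^n * x) * (vhC q n k * x^k) := by
      intro k _
      rw [pascal' hq1]
      ring
    rw [Finset.sum_congr rfl hc, Finset.sum_sub_distrib, ← Finset.mul_sum, ih]
    have h2 : ∑ k ∈ Finset.range (n+1), vhC q n (k+1) * x^(k+1)
        = qPoch x q n - 1 := by
      have e1 := Finset.sum_range_succ' (fun k => vhC q n k * x^k) (n+1)
      have e2 := Finset.sum_range_succ (fun k => vhC q n k * x^k) (n+1)
      simp only [vhC_top, zero_mul, add_zero] at e2
      rw [ih] at e2
      rw [e2] at e1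
      simp only [vhC_zero hq1, pow_zero, mul_one] at e1
      linear_combination -e1
    rw [h2, qPoch_succ]
    ring
end qbt

section main
variable {q : ℂ} (hq : q ≠ 0) (hq1 : ∀ j, 1 ≤ j → q ^ j ≠ 1)

lemma Icc_one_eq_erase (n : ℕ) : Finset.Icc 1 n = (Finset.range (n+1)).erase 0 := by
  ext a
  simp only [Finset.mem_Icc, Finset.mem_erase, Finset.mem_range]
  omega

include hq1 in
lemma sum_vh (n : ℕ) (x : ℂ) :
    ∑ k ∈ Finset.Icc 1 n, (-1 : ℂ)^(k-1) * qBinom q n k * q^(k*(k-1)/2) * x^k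
      = 1 - qPoch x q n := by
  rw [Icc_one_eq_erase]
  have hc : ∀ k ∈ (Finset.range (n+1)).erase 0,
      (-1 : ℂ)^(k-1) * qBinom q n k * q^(k*(k-1)/2) * x^k = -(vhC q n k * x^k) := by
    intro k hk
    obtain ⟨hk0, hkr⟩ := Finset.mem_erase.1 hk
    have hkn : k ≤ n := by have := Finset.mem_range.1 hkr; omega
    have hs : (-1 : ℂ)^k = -(-1 : ℂ)^(k-1) := by
      conv_lhs => rw [show k = (k-1)+1 by omega]
      rw [pow_succ]
      ring
    rw [vhC, if_pos hkn, hs]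
    ring
  rw [Finset.sum_congr rfl hc, Finset.sum_neg_distrib,
    Finset.sum_erase_eq_sub (Finset.mem_range.2 (by omega)), qbt hq1]
  simp [vhC_zero hq1]

lemma qPoch_eq_zero {x : ℂ} {n j : ℕ} (hj : j < n) (hx : x * q ^ j = 1) :
    qPoch x q n = 0 :=
  Finset.prod_eq_zero (Finset.mem_range.2 hj) (by rw [hx]; ring)

include hq1 in
lemma sum_vh_one {n : ℕ} (hn : 1 ≤ n) :
    ∑ k ∈ Finset.Icc 1 n, (-1 : ℂ)^(k-1) * qBinom q n k * q^(k*(k-1)/2) = 1 := by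
  have := sum_vh hq1 n 1
  simp only [one_pow, mul_one] at this
  rw [this, qPoch_eq_zero (x := 1) (by omega : 0 < n) (by simp), sub_zero]

include hq hq1 in
lemma sum_vh_inv {n r : ℕ} (hr : r < n) :
    ∑ k ∈ Finset.Icc 1 n, (-1 : ℂ)^(k-1) * qBinom q n k * q^(k*(k-1)/2) * ((q^r)⁻¹)^k
      = 1 := by
  rw [sum_vh hq1 n ((q^r)⁻¹),
    qPoch_eq_zero hr (inv_mul_cancel₀ (pow_ne_zero r hq)), sub_zero]

include hq1 in
lemma ratio {n k : ℕ} (hk1 : 1 ≤ k) (hk2 : k ≤ n+1) :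
    qBinom q n (k-1) * (1 - q^(n+1)) = qBinom q (n+1) k * (1 - q^k) := by
  obtain ⟨m, rfl⟩ : ∃ m, k = m + 1 := ⟨k - 1, by omega⟩
  obtain ⟨t, rfl⟩ : ∃ t, n = m + t := ⟨n - m, by omega⟩
  simp only [Nat.add_sub_cancel, show m + t - m = t by omega,
    show m + t + 1 - (m + 1) = t by omega, qBinom]
  rw [show m + t + 1 = (m + t) + 1 by omega, qPoch_q_succ (m + t), qPoch_q_succ m]
  have hm := qPoch_ne hq1 m
  have ht := qPoch_ne hq1 t
  have hmt := qPoch_ne hq1 (m + t)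
  have h1 := one_sub_q_ne hq1 (j := m + 1) (by omega)
  field_simp
end main

section base
variable {q : ℂ} (hq : q ≠ 0) (hq1 : ∀ j, 1 ≤ j → q ^ j ≠ 1)

include hq1 in
lemma vh0 (n : ℕ) :
    ∑ k ∈ Finset.Icc 1 n, (-1 : ℂ)^(k-1) * qBinom q n k * q^(k*(k+1)/2) / (1 - q^k)
      = ∑ k ∈ Finset.Icc 1 n, q^k / (1 - q^k) := by
  induction n with
  | zero => simp
  | succ n ih =>
    have hins : Finset.Icc 1 (n+1) = insert (n+1) (Finset.Icc 1 n) := by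
      ext a
      simp only [Finset.mem_Icc, Finset.mem_insert]
      omega
    have hnotmem : n+1 ∉ Finset.Icc 1 n := by simp
    have hN := one_sub_q_ne hq1 (j := n+1) (by omega)
    -- the per-term u k, rewritten
    have hu : ∀ k ∈ Finset.Icc 1 (n+1),
        (-1 : ℂ)^(k-1) * (q^(n+1-k) * qBinom q n (k-1)) * q^(k*(k+1)/2) / (1 - q^k)
          = (q^(n+1) / (1 - q^(n+1))) *
            ((-1 : ℂ)^(k-1) * qBinom q (n+1) k * q^(k*(k-1)/2)) := by
      intro k hk
      obtain ⟨hk1, hk2⟩ := Finset.mem_Icc.1 hk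
      have hk0 := one_sub_q_ne hq1 (j := k) hk1
      have hr := ratio hq1 hk1 hk2
      have hexp : (q : ℂ)^(n+1-k) * q^(k*(k+1)/2) = q^(n+1) * q^(k*(k-1)/2) := by
        rw [← pow_add, ← pow_add]
        congr 1
        have h1 : k*(k+1)/2 = (k+1)*((k+1)-1)/2 := by
          rw [Nat.add_sub_cancel, Nat.mul_comm]
        have h2 := tri k
        omega
      have hb : qBinom q n (k-1) / (1 - q^k) = qBinom q (n+1) k / (1 - q^(n+1)) := by
        rw [div_eq_div_iff hk0 hN]
        linear_combination hr
      calc (-1 : ℂ)^(k-1) * (q^(n+1-k) * qBinom q n (k-1)) * q^(k*(k+1)/2) / (1 - q^k)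
          = ((-1 : ℂ)^(k-1) * (q^(n+1-k) * q^(k*(k+1)/2))) * (qBinom q n (k-1) / (1 - q^k)) := by
            ring
        _ = ((-1 : ℂ)^(k-1) * (q^(n+1) * q^(k*(k-1)/2))) * (qBinom q (n+1) k / (1 - q^(n+1))) := by
            rw [hexp, hb]
        _ = _ := by ring
    -- pascal split on Icc 1 n
    have hp : ∀ k ∈ Finset.Icc 1 n,
        (-1 : ℂ)^(k-1) * qBinom q (n+1) k * q^(k*(k+1)/2) / (1 - q^k)
          = (-1 : ℂ)^(k-1) * qBinom q n k * q^(k*(k+1)/2) / (1 - q^k)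
            + (-1 : ℂ)^(k-1) * (q^(n+1-k) * qBinom q n (k-1)) * q^(k*(k+1)/2) / (1 - q^k) := by
      intro k hk
      obtain ⟨hk1, hk2⟩ := Finset.mem_Icc.1 hk
      rw [pascal hq1 hk1 hk2]
      ring
    rw [hins, Finset.sum_insert hnotmem, Finset.sum_insert hnotmem,
      Finset.sum_congr rfl hp, Finset.sum_add_distrib, ih]
    have hlast : (-1 : ℂ)^(n+1-1) * qBinom q (n+1) (n+1) * q^((n+1)*((n+1)+1)/2) / (1 - q^(n+1))
        = (-1 : ℂ)^(n+1-1) * (q^(n+1-(n+1)) * qBinom q n (n+1-1)) * q^((n+1)*((n+1)+1)/2) / (1 - q^(n+1)) := by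
      rw [qBinom_self hq1, Nat.sub_self, Nat.add_sub_cancel, qBinom_self hq1]
      simp
    rw [hlast]
    have hsum : (-1 : ℂ)^(n+1-1) * (q^(n+1-(n+1)) * qBinom q n (n+1-1)) * q^((n+1)*((n+1)+1)/2) / (1 - q^(n+1))
        + ∑ k ∈ Finset.Icc 1 n, (-1 : ℂ)^(k-1) * (q^(n+1-k) * qBinom q n (k-1)) * q^(k*(k+1)/2) / (1 - q^k)
        = ∑ k ∈ Finset.Icc 1 (n+1), (-1 : ℂ)^(k-1) * (q^(n+1-k) * qBinom q n (k-1)) * q^(k*(k+1)/2) / (1 - q^k) := by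
      rw [hins, Finset.sum_insert hnotmem]
    rw [Finset.sum_congr rfl hu, ← Finset.mul_sum, sum_vh_one hq1 (by omega), mul_one] at hsum
    linear_combination hsum
end base

/-- Generalized Van Hamme identity. -/

theorem stmt7 (n r : ℕ) (hr : r ≤ n) (q : ℂ) (hq : q ≠ 0)
    (hq1 : ∀ j, 1 ≤ j → q ^ j ≠ 1) :
    ∑ k ∈ Finset.Icc 1 n,
        (-1 : ℂ) ^ (k - 1) * qBinom q n k *
          q ^ (((k * (k + 1) / 2 : ℕ) : ℤ) - (r : ℤ) * k) / (1 - q ^ k)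
      = (r : ℂ) + ∑ k ∈ Finset.Icc 1 n, q ^ k / (1 - q ^ k) := by
  induction r with
  | zero =>
    have hc : ∀ k ∈ Finset.Icc 1 n,
        (-1 : ℂ) ^ (k - 1) * qBinom q n k *
            q ^ (((k * (k + 1) / 2 : ℕ) : ℤ) - ((0 : ℕ) : ℤ) * k) / (1 - q ^ k)
          = (-1 : ℂ) ^ (k - 1) * qBinom q n k * q ^ (k * (k + 1) / 2) / (1 - q ^ k) := by
      intro k _
      rw [show ((0:ℕ):ℤ) * (k:ℤ) = 0 by push_cast; ring, sub_zero, zpow_natCast]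
    rw [Finset.sum_congr rfl hc, vh0 hq1]
    simp
  | succ r ih =>
    have hr' : r ≤ n := by omega
    have hterm : ∀ k ∈ Finset.Icc 1 n,
        (-1 : ℂ) ^ (k - 1) * qBinom q n k *
            q ^ (((k * (k + 1) / 2 : ℕ) : ℤ) - ((r + 1 : ℕ) : ℤ) * k) / (1 - q ^ k)
          = (-1 : ℂ) ^ (k - 1) * qBinom q n k *
              q ^ (((k * (k + 1) / 2 : ℕ) : ℤ) - (r : ℤ) * k) / (1 - q ^ k)
            + (-1 : ℂ) ^ (k - 1) * qBinom q n k * q ^ (k * (k - 1) / 2) * ((q ^ r)⁻¹) ^ k := by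
      intro k hk
      obtain ⟨hk1, hk2⟩ := Finset.mem_Icc.1 hk
      have hk0 := one_sub_q_ne hq1 (j := k) hk1
      have hnat : k * (k + 1) / 2 = k * (k - 1) / 2 + k := by
        have h1 : (k + 1) * ((k + 1) - 1) / 2 = k * (k + 1) / 2 := by
          rw [Nat.add_sub_cancel, Nat.mul_comm]
        have h2 := tri k
        omega
      have hab : ((k * (k + 1) / 2 : ℕ) : ℤ) = ((k * (k - 1) / 2 : ℕ) : ℤ) + k := by
        rw [hnat]; push_cast; ring
      have e1 : ((k * (k + 1) / 2 : ℕ) : ℤ) - ((r + 1 : ℕ) : ℤ) * k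
          = ((k * (k - 1) / 2 : ℕ) : ℤ) - (r : ℤ) * k := by
        rw [hab]; push_cast; ring
      have e2 : ((k * (k + 1) / 2 : ℕ) : ℤ) - (r : ℤ) * k
          = (((k * (k - 1) / 2 : ℕ) : ℤ) - (r : ℤ) * k) + (k : ℤ) := by
        rw [hab]; ring
      have e3 : (q : ℂ) ^ (((k * (k - 1) / 2 : ℕ) : ℤ) - (r : ℤ) * k)
          = q ^ (k * (k - 1) / 2) * ((q ^ r)⁻¹) ^ k := by
        rw [show (r : ℤ) * k = ((r * k : ℕ) : ℤ) by push_cast; ring,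
          zpow_sub₀ hq, zpow_natCast, zpow_natCast, pow_mul, div_eq_mul_inv, inv_pow]
      rw [e1, e2, zpow_add₀ hq, zpow_natCast, e3]
      have hi : ((q ^ r)⁻¹ : ℂ) ^ k = (q ^ (r * k))⁻¹ := by
        rw [inv_pow, pow_mul]
      rw [hi]
      have hrk : (q : ℂ) ^ (r * k) ≠ 0 := pow_ne_zero _ hq
      field_simp
      ring
    rw [Finset.sum_congr rfl hterm, Finset.sum_add_distrib, ih hr',
      sum_vh_inv hq hq1 (show r < n by omega)]
    push_cast
    ring
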